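/- In the abstract setting (X a σ-finite measure space, A self-adjoint on L²(X), 2<q<∞ fixed, resolvents consistently extended to L^{q′}(X)→L²(X) and L^{q′}(X)→L^q(X)): there is an absolute constant C such that for all 0<ε≤λ, ‖Π_{[0,2λ]}(A²−(λ+iε)²)^{-1}‖_{L^{q′}→L²} ≤ C (ελ)^{-1} S_ε and ‖Π_{[0,2λ]}(A²−(λ+iε)²)^{-1}‖_{L^{q′}→L^q} ≤ C (ελ)^{-1} ln⟨λ/ε⟩ · S_ε², where S_ε := sup{ ‖Π_{[εk,ε(k+1)]}‖_{L^{q′}→L²} : k∈ℤ, 0≤k≤2λ/ε }. -/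

import Mathlib

open MeasureTheory Complex Set

noncomputable section

/-- The Japanese bracket `⟨x⟩ = 2 + |x|`. -/
def jb (x : ℝ) : ℝ := 2 + |x|

/-- The Hölder conjugate exponent `q' = q/(q-1)`. -/
def conjExp (q : ℝ) : ℝ := q / (q - 1)

/-- `σ(q) = min( n(1/2−1/q)−1/2 , ((n−1)/2)(1/2−1/q) )`. -/
def sigmaExp (n : ℕ) (q : ℝ) : ℝ :=
  min ((n : ℝ) * (1 / 2 - 1 / q) - 1 / 2) (((n : ℝ) - 1) / 2 * (1 / 2 - 1 / q))

/-- The admissible range of exponents: `2 ≤ q ≤ 2n/(n−2)` if `n ≥ 3`, `2 ≤ q < ∞` if `n = 2`. -/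
def qRange (n : ℕ) (q : ℝ) : Prop :=
  2 ≤ q ∧ (3 ≤ n → q ≤ 2 * n / ((n : ℝ) - 2))

variable {X : Type*} [MeasurableSpace X]

/-- `OpNormLE μ T p r C` : the operator `T`, defined on `L²(μ)`, satisfies
`‖T f‖_{L^r} ≤ C ‖f‖_{L^p}` for every `f ∈ L²(μ)`; equivalently (by density), `T`
extends from `L² ∩ L^p` to a bounded operator `L^p(μ) → L^r(μ)` of norm at most `C`. -/
def OpNormLE (μ : Measure X) (T : Lp ℂ 2 μ →L[ℂ] Lp ℂ 2 μ) (p r C : ℝ) : Prop :=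
  ∀ f : Lp ℂ 2 μ,
    eLpNorm (⇑(T f)) (ENNReal.ofReal r) μ ≤
      ENNReal.ofReal C * eLpNorm (⇑f) (ENNReal.ofReal p) μ

/-- An abstract Borel functional calculus on `L²(μ)`, i.e. the assignment `m ↦ m(A)`
given by the spectral theorem for a self-adjoint operator `A` on `L²(μ)`. -/
structure BorelFC (μ : Measure X) where
  fc : (ℝ → ℂ) → (Lp ℂ 2 μ →L[ℂ] Lp ℂ 2 μ)
  fc_add : ∀ m₁ m₂ : ℝ → ℂ, fc (fun t => m₁ t + m₂ t) = fc m₁ + fc m₂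
  fc_smul : ∀ (c : ℂ) (m : ℝ → ℂ), fc (fun t => c * m t) = c • fc m
  fc_mul : ∀ m₁ m₂ : ℝ → ℂ, fc (fun t => m₁ t * m₂ t) = (fc m₁).comp (fc m₂)
  fc_one : fc (fun _ => 1) = ContinuousLinearMap.id ℂ (Lp ℂ 2 μ)
  fc_norm_le : ∀ (m : ℝ → ℂ) (C : ℝ), (∀ t, ‖m t‖ ≤ C) → ‖fc m‖ ≤ C
  fc_star : ∀ m : ℝ → ℂ,
    fc (fun t => (starRingEnd ℂ) (m t)) = ContinuousLinearMap.adjoint (fc m)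

namespace BorelFC

variable {μ : Measure X} (F : BorelFC μ)

/-- The spectral projection `Π_{[a,b]} = 1_{[a,b]}(A)`. -/
def proj (a b : ℝ) : Lp ℂ 2 μ →L[ℂ] Lp ℂ 2 μ :=
  F.fc (Set.indicator (Set.Icc a b) fun _ => (1 : ℂ))

/-- The resolvent `(A² − z)⁻¹` of `A²`, via the functional calculus of `A`. -/
def res2 (z : ℂ) : Lp ℂ 2 μ →L[ℂ] Lp ℂ 2 μ :=
  F.fc fun t => (((t : ℂ)) ^ 2 - z)⁻¹

/-- If `F` is the functional calculus of `A = √(−Δ_g)`, this is the resolvent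
`(Δ_g + z)⁻¹ = (z − A²)⁻¹`. -/
def resLap (z : ℂ) : Lp ℂ 2 μ →L[ℂ] Lp ℂ 2 μ :=
  F.fc fun t => (z - ((t : ℂ)) ^ 2)⁻¹

end BorelFC

/-- The imaginary part `Im T = (T − T^*)/(2i)` of an operator on `L²(μ)`. -/
def imOp {μ : Measure X} (T : Lp ℂ 2 μ →L[ℂ] Lp ℂ 2 μ) : Lp ℂ 2 μ →L[ℂ] Lp ℂ 2 μ :=
  ((2 * Complex.I)⁻¹) • (T - ContinuousLinearMap.adjoint T)

/-- The resolvents `(A−z)⁻¹`, `z ∈ ℂ∖ℝ`, of the self-adjoint operator `A` underlying the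
functional calculus `F` admit consistent bounded extensions `L^{q′} → L²` and
`L^{q′} → L^q`. -/
def ResolventExtends {μ : Measure X} (F : BorelFC μ) (q : ℝ) : Prop :=
  ∀ z : ℂ, z.im ≠ 0 →
    (∃ C : ℝ, OpNormLE μ (F.fc fun t => ((t : ℂ) - z)⁻¹) (conjExp q) 2 C) ∧
    (∃ C : ℝ, OpNormLE μ (F.fc fun t => ((t : ℂ) - z)⁻¹) (conjExp q) q C)


lemma aux_sum_inv_sq (M : ℕ) : ∑ j ∈ Finset.range M, ((j:ℝ)+1)⁻¹^2 ≤ 2 := by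
  have h : ∀ M : ℕ, 1 ≤ M → ∑ j ∈ Finset.range M, ((j:ℝ)+1)⁻¹^2 ≤ 2 - (M:ℝ)⁻¹ := by
    intro M hM
    induction M, hM using Nat.le_induction with
    | base => norm_num
    | succ n hn ih =>
      rw [Finset.sum_range_succ]
      have hn' : (1:ℝ) ≤ (n:ℝ) := by exact_mod_cast hn
      have key : ((n:ℝ)+1)⁻¹^2 ≤ (n:ℝ)⁻¹ - ((n:ℝ)+1)⁻¹ := by
        have h1 : (0:ℝ) < (n:ℝ) := by linarith
        have h2 : (0:ℝ) < (n:ℝ)+1 := by linarith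
        have e1 : (n:ℝ)⁻¹ - ((n:ℝ)+1)⁻¹ = ((n:ℝ)*((n:ℝ)+1))⁻¹ := by
          field_simp
          ring
        rw [e1, pow_two, ← mul_inv]
        apply inv_anti₀ (by positivity)
        nlinarith
      push_cast
      linarith
  rcases Nat.eq_zero_or_pos M with h0 | h1
  · simp [h0]
  · have := h M h1
    have h2 : (0:ℝ) ≤ (M:ℝ)⁻¹ := by positivity
    linarith

lemma aux_sum_maxinv_sq (M : ℕ) : ∑ j ∈ Finset.range (M+1), ((max (j:ℝ) 1)⁻¹)^2 ≤ 3 := by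
  rw [Finset.sum_range_succ']
  have h2 : ∑ j ∈ Finset.range M, ((max ((j+1:ℕ):ℝ) 1)⁻¹)^2 ≤ 2 := by
    calc ∑ j ∈ Finset.range M, ((max ((j+1:ℕ):ℝ) 1)⁻¹)^2
        = ∑ j ∈ Finset.range M, ((j:ℝ)+1)⁻¹^2 := by
          apply Finset.sum_congr rfl; intro j _
          push_cast
          rw [max_eq_left (by linarith [Nat.cast_nonneg (α := ℝ) j])]
      _ ≤ 2 := aux_sum_inv_sq M
  have h3 : ((max ((0:ℕ):ℝ) 1)⁻¹)^2 = 1 := by norm_num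
  rw [h3]
  linarith

lemma aux_sum_maxinv (M : ℕ) :
    ∑ j ∈ Finset.range (M+1), (max (j:ℝ) 1)⁻¹ ≤ 2 + Real.log M := by
  rw [Finset.sum_range_succ']
  have h2 : ∑ j ∈ Finset.range M, (max ((j+1:ℕ):ℝ) 1)⁻¹ = (harmonic M : ℝ) := by
    rw [harmonic]
    push_cast
    apply Finset.sum_congr rfl
    intro j _
    rw [max_eq_left (by linarith [Nat.cast_nonneg (α := ℝ) j])]
  rw [h2]
  have := harmonic_le_one_add_log M
  have h3 : ((max ((0:ℕ):ℝ) 1)⁻¹) = 1 := by norm_num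
  rw [h3]
  have hcast : (harmonic M : ℝ) ≤ 1 + Real.log M := by exact_mod_cast this
  linarith

lemma natdist_cast (k k₀ : ℕ) : (Nat.dist k k₀ : ℝ) = |(k:ℝ) - (k₀:ℝ)| := by
  rcases le_total k k₀ with h | h
  · rw [Nat.dist_eq_sub_of_le h, abs_sub_comm,
      _root_.abs_of_nonneg (sub_nonneg.mpr (by exact_mod_cast h))]
    push_cast [h]; ring
  · rw [Nat.dist_eq_sub_of_le_right h,
      _root_.abs_of_nonneg (sub_nonneg.mpr (by exact_mod_cast h))]
    push_cast [h]; ring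

lemma aux_sum_shift (G : ℕ → ℝ) (hG : ∀ j, 0 ≤ G j) (k₀ K : ℕ) (hk : k₀ ≤ K) :
    ∑ k ∈ Finset.range (K+1), G (Nat.dist k k₀) ≤ 2 * ∑ j ∈ Finset.range (K+1), G j := by
  have hsplit : Finset.range (K+1) = Finset.range (k₀+1) ∪ Finset.Ico (k₀+1) (K+1) := by
    simp only [Finset.range_eq_Ico]
    exact (Finset.Ico_union_Ico_eq_Ico (Nat.zero_le _) (by omega)).symm
  nth_rewrite 1 [hsplit]
  rw [Finset.sum_union (by
    rw [Finset.range_eq_Ico]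
    exact Finset.Ico_disjoint_Ico_consecutive 0 (k₀+1) (K+1))]
  have h1 : ∑ k ∈ Finset.range (k₀+1), G (Nat.dist k k₀) ≤ ∑ j ∈ Finset.range (K+1), G j := by
    have e : ∑ k ∈ Finset.range (k₀+1), G (Nat.dist k k₀)
        = ∑ j ∈ Finset.range (k₀+1), G (Nat.dist (k₀ + 1 - 1 - j) k₀) :=
      (Finset.sum_range_reflect (fun k => G (Nat.dist k k₀)) (k₀+1)).symm
    rw [e]
    have e2 : ∀ j ∈ Finset.range (k₀+1), G (Nat.dist (k₀ + 1 - 1 - j) k₀) = G j := by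
      intro j hj
      simp only [Finset.mem_range] at hj
      congr 1
      rw [Nat.dist_eq_sub_of_le (by omega)]
      omega
    rw [Finset.sum_congr rfl e2]
    apply Finset.sum_le_sum_of_subset_of_nonneg
    · exact Finset.range_subset_range.mpr (by omega)
    · intro i _ _; exact hG i
  have h2 : ∑ k ∈ Finset.Ico (k₀+1) (K+1), G (Nat.dist k k₀) ≤ ∑ j ∈ Finset.range (K+1), G j := by
    have e : ∑ k ∈ Finset.Ico (k₀+1) (K+1), G (Nat.dist k k₀)
        = ∑ j ∈ Finset.range (K+1-(k₀+1)), G (Nat.dist (k₀+1+j) k₀) := by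
      rw [Finset.sum_Ico_eq_sum_range]
    rw [e]
    have e2 : ∀ j ∈ Finset.range (K+1-(k₀+1)), G (Nat.dist (k₀+1+j) k₀) = G (j+1) := by
      intro j _
      congr 1
      rw [Nat.dist_eq_sub_of_le_right (by omega)]
      omega
    rw [Finset.sum_congr rfl e2]
    calc ∑ j ∈ Finset.range (K+1-(k₀+1)), G (j+1)
        = ∑ j ∈ Finset.range (K-k₀), G (j+1) := by
          have hKk : K+1-(k₀+1) = K-k₀ := by omega
          rw [hKk]
      _ ≤ ∑ j ∈ Finset.range (K-k₀), G (j+1) + G 0 := by linarith [hG 0]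
      _ = ∑ j ∈ Finset.range (K-k₀+1), G j := (Finset.sum_range_succ' G (K-k₀)).symm
      _ ≤ ∑ j ∈ Finset.range (K+1), G j := by
          apply Finset.sum_le_sum_of_subset_of_nonneg
          · exact Finset.range_subset_range.mpr (by omega)
          · intro i _ _; exact hG i
  linarith

lemma res_bound {e lam t : ℝ} (he : 0 < e) (helam : e ≤ lam) (k : ℕ)
    (ht0 : 0 ≤ t) (ht2 : t ≤ 2*lam) (htk : e*k ≤ t) (htk1 : t ≤ e*(k+1)) :
    ‖(((t:ℂ))^2 - ((lam:ℂ) + (e:ℂ)*Complex.I)^2)⁻¹‖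
      ≤ (e*lam)⁻¹ * (max (|(k:ℝ) - lam/e| - 1) 1)⁻¹ := by
  have hlam : 0 < lam := lt_of_lt_of_le he helam
  set w : ℂ := (lam:ℂ) + (e:ℂ)*Complex.I with hw
  set d : ℝ := max (|(k:ℝ) - lam/e| - 1) 1 with hd
  have hd1 : (1:ℝ) ≤ d := le_max_right _ _
  have hd0 : (0:ℝ) < d := by linarith
  have h1 : e * d ≤ ‖(t:ℂ) - w‖ := by
    have hre : ((t:ℂ) - w).re = t - lam := by
      rw [hw]; simp
    have him : ((t:ℂ) - w).im = -e := by
      rw [hw]; simp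
    have hre_le : |t - lam| ≤ ‖(t:ℂ) - w‖ := by
      rw [← hre]; exact Complex.abs_re_le_norm _
    have him_le : e ≤ ‖(t:ℂ) - w‖ := by
      have h' := Complex.abs_im_le_norm ((t:ℂ) - w)
      rw [him, abs_neg, abs_of_pos he] at h'
      exact h'
    rcases max_cases (|(k:ℝ) - lam/e| - 1) 1 with ⟨hmax, hcase⟩ | ⟨hmax, hcase⟩
    · have e0 : e*(k:ℝ) - lam = e * ((k:ℝ) - lam/e) := by field_simp
      have e1 : |e*(k:ℝ) - lam| = e * |(k:ℝ) - lam/e| := by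
        rw [e0, abs_mul, abs_of_pos he]
      have e2 : |e*k - t| ≤ e := by
        rw [abs_le]
        constructor <;> nlinarith
      have e3 : |e*(k:ℝ) - lam| ≤ e + |t - lam| := by
        calc |e*(k:ℝ) - lam| = |(e*k - t) + (t - lam)| := by ring_nf
          _ ≤ |e*(k:ℝ) - t| + |t - lam| := abs_add_le _ _
          _ ≤ e + |t - lam| := by linarith
      have e4 : e * d = |e*(k:ℝ) - lam| - e := by
        rw [hd, hmax, mul_sub, mul_one, ← e1]
      rw [e4]
      linarith
    · rw [hd, hmax, mul_one]
      exact him_le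
  have h2 : lam ≤ ‖(t:ℂ) + w‖ := by
    have hre : ((t:ℂ) + w).re = t + lam := by
      rw [hw]; simp
    have h' := Complex.abs_re_le_norm ((t:ℂ) + w)
    rw [hre, _root_.abs_of_nonneg (by linarith)] at h'
    linarith
  have hfac : ((t:ℂ))^2 - w^2 = ((t:ℂ) - w) * ((t:ℂ) + w) := by ring
  rw [hfac, norm_inv, norm_mul]
  have hprod : e * d * lam ≤ ‖(t:ℂ) - w‖ * ‖(t:ℂ) + w‖ :=
    mul_le_mul h1 h2 hlam.le (by positivity)
  have heq : (e * d * lam)⁻¹ = (e*lam)⁻¹ * d⁻¹ := by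
    rw [mul_inv, mul_inv, mul_inv]
    ring
  rw [← heq]
  exact inv_anti₀ (by positivity) hprod

-- converse holder
lemma converse_holder {Y : Type} [MeasurableSpace Y] {ν : Measure Y}
    {q : ℝ} (hq : 2 < q) (h : Lp ℂ 2 ν) {M : ℝ} (hM : 0 ≤ M)
    (H : ∀ g : Lp ℂ 2 ν,
      ENNReal.ofReal ‖(inner ℂ g h : ℂ)‖ ≤
        ENNReal.ofReal M * eLpNorm (⇑g) (ENNReal.ofReal (conjExp q)) ν) :
    eLpNorm (⇑h) (ENNReal.ofReal q) ν ≤ ENNReal.ofReal M := by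
  have hq1 : (1:ℝ) < q := by linarith
  have hq0 : (0:ℝ) < q := by linarith
  set q' : ℝ := conjExp q with hq'def
  have hq'0 : 0 < q' := by
    rw [hq'def, conjExp]; exact div_pos hq0 (by linarith)
  have hmul : (q - 1) * q' = q := by
    rw [hq'def, conjExp, mul_comm]
    exact div_mul_cancel₀ q (by linarith)
  have hrecip : 1/q + 1/q' = 1 := by
    rw [hq'def, conjExp, one_div_div]
    field_simp
    ring
  set φ : Y → ℂ := ⇑h with hφdef
  have hφsm : StronglyMeasurable φ := Lp.stronglyMeasurable h
  have hφm : Measurable fun x => ‖φ x‖ := hφsm.measurable.norm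
  set ρ : ℕ → Y → ℝ :=
    fun n x => if ((n:ℝ)+1)⁻¹ ≤ ‖φ x‖ then (min ‖φ x‖ n)^(q-1) / ‖φ x‖ else 0 with hρdef
  set ζ : ℕ → Y → ℝ :=
    fun n x => if ((n:ℝ)+1)⁻¹ ≤ ‖φ x‖ then (min ‖φ x‖ n)^q else 0 with hζdef
  set ψ : ℕ → Y → ℂ := fun n x => (ρ n x : ℂ) * φ x with hψdef
  have hSmeas : ∀ n : ℕ, MeasurableSet {x | ((n:ℝ)+1)⁻¹ ≤ ‖φ x‖} :=
    fun n => measurableSet_le measurable_const hφm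
  have hminnn : ∀ (n : ℕ) (x : Y), 0 ≤ min ‖φ x‖ (n:ℝ) :=
    fun n x => le_min (norm_nonneg _) (Nat.cast_nonneg n)
  have hρnn : ∀ n x, 0 ≤ ρ n x := by
    intro n x
    rw [hρdef]
    dsimp only
    split
    · positivity
    · exact le_rfl
  have hζnn : ∀ n x, 0 ≤ ζ n x := by
    intro n x
    rw [hζdef]
    dsimp only
    split
    · positivity
    · exact le_rfl
  have hζm : ∀ n, Measurable (ζ n) := by
    intro n
    apply Measurable.ite (hSmeas n) _ measurable_const
    exact (Real.continuous_rpow_const hq0.le).measurable.comp (hφm.min measurable_const)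
  have hρm : ∀ n, Measurable (ρ n) := by
    intro n
    apply Measurable.ite (hSmeas n) _ measurable_const
    exact ((Real.continuous_rpow_const (by linarith : (0:ℝ) ≤ q - 1)).measurable.comp
      (hφm.min measurable_const)).div hφm
  have hψsm : ∀ n, StronglyMeasurable (ψ n) := by
    intro n
    exact ((Complex.measurable_ofReal.comp (hρm n)).mul hφsm.measurable).stronglyMeasurable
  have hSfin : ∀ n : ℕ, ν {x | ((n:ℝ)+1)⁻¹ ≤ ‖φ x‖} < ⊤ := by
    intro n
    have hpos : (0:ℝ) < ((n:ℝ)+1)⁻¹ := by positivity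
    have := (Lp.memLp h).meas_ge_lt_top' (p := 2) two_ne_zero ENNReal.ofNat_ne_top
      (ε := ENNReal.ofReal (((n:ℝ)+1)⁻¹)) (by simp [ENNReal.ofReal_pos.mpr hpos, ne_of_gt])
    convert this using 2
    ext x
    simp only [Set.mem_setOf_eq]
    rw [← ENNReal.ofReal_coe_nnreal, coe_nnnorm]
    exact (ENNReal.ofReal_le_ofReal_iff (norm_nonneg _)).symm
  -- norm of ψ
  have hnormψ : ∀ n x, ‖ψ n x‖ = if ((n:ℝ)+1)⁻¹ ≤ ‖φ x‖ then (min ‖φ x‖ n)^(q-1) else 0 := by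
    intro n x
    rw [hψdef]
    dsimp only
    rw [norm_mul, Complex.norm_real, Real.norm_eq_abs, _root_.abs_of_nonneg (hρnn n x), hρdef]
    dsimp only
    split
    · rename_i hc
      have hφpos : 0 < ‖φ x‖ := lt_of_lt_of_le (by positivity) hc
      exact div_mul_cancel₀ _ (ne_of_gt hφpos)
    · simp
  -- ψ is in L²
  have hψmem : ∀ n, MemLp (ψ n) 2 ν := by
    intro n
    set c : ℝ := ((n:ℝ)+1)^(q-1) with hcdef
    have hc0 : 0 ≤ c := by rw [hcdef]; positivity
    apply MemLp.of_le
      (memLp_indicator_const 2 (hSmeas n) c (Or.inr (hSfin n).ne))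
      (hψsm n).aestronglyMeasurable
    apply ae_of_all
    intro x
    rw [hnormψ n x]
    by_cases hx : ((n:ℝ)+1)⁻¹ ≤ ‖φ x‖
    · rw [Set.indicator_of_mem (show x ∈ {x | ((n:ℝ)+1)⁻¹ ≤ ‖φ x‖} from hx) (fun _ => c),
        if_pos hx, Real.norm_eq_abs, _root_.abs_of_nonneg hc0]
      apply Real.rpow_le_rpow (hminnn n x) _ (by linarith)
      calc min ‖φ x‖ (n:ℝ) ≤ (n:ℝ) := min_le_right _ _
        _ ≤ (n:ℝ)+1 := by linarith
    · rw [Set.indicator_of_notMem (show x ∉ {x | ((n:ℝ)+1)⁻¹ ≤ ‖φ x‖} from hx) (fun _ => c),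
        if_neg hx]
      simp
  set Ψ : ℕ → Lp ℂ 2 ν := fun n => (hψmem n).toLp (ψ n) with hΨdef
  set J : ℕ → ℝ := fun n => ∫ x, ζ n x ∂ν with hJdef
  have hζint : ∀ n, Integrable (ζ n) ν := by
    intro n
    set c : ℝ := ((n:ℝ)+1)^q with hcdef
    have hc0 : 0 ≤ c := by rw [hcdef]; positivity
    apply Integrable.mono'
      (memLp_one_iff_integrable.mp (memLp_indicator_const 1 (hSmeas n) c (Or.inr (hSfin n).ne)))
      (hζm n).aestronglyMeasurable
    apply ae_of_all
    intro x
    rw [hζdef]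
    dsimp only
    by_cases hx : ((n:ℝ)+1)⁻¹ ≤ ‖φ x‖
    · rw [Set.indicator_of_mem (show x ∈ {x | ((n:ℝ)+1)⁻¹ ≤ ‖φ x‖} from hx) (fun _ => c),
        if_pos hx, Real.norm_eq_abs,
        _root_.abs_of_nonneg (by positivity)]
      apply Real.rpow_le_rpow (hminnn n x) _ hq0.le
      calc min ‖φ x‖ (n:ℝ) ≤ (n:ℝ) := min_le_right _ _
        _ ≤ (n:ℝ)+1 := by linarith
    · rw [Set.indicator_of_notMem (show x ∉ {x | ((n:ℝ)+1)⁻¹ ≤ ‖φ x‖} from hx) (fun _ => c),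
        if_neg hx]
      simp
  have hJnn : ∀ n, 0 ≤ J n := fun n => integral_nonneg (hζnn n)

  have hcoe : ∀ n, ⇑(Ψ n) =ᵐ[ν] ψ n := fun n => MemLp.coeFn_toLp (hψmem n)
  -- pointwise identity for the inner integrand
  have hptre : ∀ n x, Complex.re ((inner ℂ (ψ n x) (φ x) : ℂ)) = ρ n x * ‖φ x‖^2 := by
    intro n x
    rw [RCLike.inner_apply]
    rw [hψdef]
    dsimp only
    rw [map_mul, Complex.conj_ofReal, mul_left_comm]
    rw [Complex.mul_conj]
    rw [← Complex.ofReal_mul]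
    rw [Complex.ofReal_re, Complex.normSq_eq_norm_sq]
  have hptle : ∀ n x, ζ n x ≤ ρ n x * ‖φ x‖^2 := by
    intro n x
    rw [hζdef, hρdef]
    dsimp only
    by_cases hc : ((n:ℝ)+1)⁻¹ ≤ ‖φ x‖
    · rw [if_pos hc, if_pos hc]
      have hφpos : 0 < ‖φ x‖ := lt_of_lt_of_le (by positivity) hc
      have e1 : (min ‖φ x‖ (n:ℝ))^(q-1) / ‖φ x‖ * ‖φ x‖^2
          = (min ‖φ x‖ (n:ℝ))^(q-1) * ‖φ x‖ := by
        have hne : ‖φ x‖ ≠ 0 := ne_of_gt hφpos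
        rw [pow_two, ← mul_assoc, div_mul_cancel₀ _ hne]
      rw [e1]
      have e2 : (min ‖φ x‖ (n:ℝ))^q = (min ‖φ x‖ (n:ℝ))^(q-1) * (min ‖φ x‖ (n:ℝ)) := by
        have e2' := Real.rpow_add' (hminnn n x) (y := q-1) (z := 1)
          (by intro hcon; linarith)
        rw [Real.rpow_one] at e2'
        rw [← e2']
        norm_num
      rw [e2]
      apply mul_le_mul_of_nonneg_left (min_le_left _ _) (Real.rpow_nonneg (hminnn n x) _)
    · rw [if_neg hc, if_neg hc]
      simp
  have hρφint : ∀ n, Integrable (fun x => ρ n x * ‖φ x‖^2) ν := by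
    intro n
    have : Integrable (fun x => (inner ℂ ((Ψ n) x) (h x) : ℂ)) ν :=
      L2.integrable_inner (𝕜 := ℂ) (Ψ n) h
    have h2 : Integrable (fun x => (inner ℂ (ψ n x) (φ x) : ℂ)) ν := by
      apply this.congr
      filter_upwards [hcoe n] with x hx
      rw [hx]
    have h3 := h2.re
    apply h3.congr
    apply ae_of_all
    intro x
    exact hptre n x
  have hpair : ∀ n, J n ≤ ‖(inner ℂ (Ψ n) h : ℂ)‖ := by
    intro n
    have e1 : (inner ℂ (Ψ n) h : ℂ) = ∫ x, (inner ℂ ((Ψ n) x) (h x) : ℂ) ∂ν :=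
      L2.inner_def (Ψ n) h
    have hint : Integrable (fun x => (inner ℂ ((Ψ n) x) (h x) : ℂ)) ν :=
      L2.integrable_inner (𝕜 := ℂ) (Ψ n) h
    have e2 : Complex.re (inner ℂ (Ψ n) h : ℂ) = ∫ x, Complex.re (inner ℂ ((Ψ n) x) (h x) : ℂ) ∂ν := by
      rw [e1]
      exact (integral_re hint).symm
    have e3 : ∫ x, Complex.re (inner ℂ ((Ψ n) x) (h x) : ℂ) ∂ν = ∫ x, ρ n x * ‖φ x‖^2 ∂ν := by
      apply integral_congr_ae
      filter_upwards [hcoe n] with x hx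
      rw [hx]
      exact hptre n x
    have e4 : J n ≤ ∫ x, ρ n x * ‖φ x‖^2 ∂ν := by
      rw [hJdef]
      exact integral_mono (hζint n) (hρφint n) (fun x => hptle n x)
    calc J n ≤ ∫ x, ρ n x * ‖φ x‖^2 ∂ν := e4
      _ = Complex.re (inner ℂ (Ψ n) h : ℂ) := by rw [e2, e3]
      _ ≤ ‖(inner ℂ (Ψ n) h : ℂ)‖ := Complex.re_le_norm _
  -- q' norm of ψ n
  have heLp : ∀ n, eLpNorm (⇑(Ψ n)) (ENNReal.ofReal q') ν = (ENNReal.ofReal (J n)) ^ (1/q') := by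
    intro n
    rw [eLpNorm_congr_ae (hcoe n)]
    rw [eLpNorm_eq_lintegral_rpow_enorm_toReal
      (by simpa using (ENNReal.ofReal_pos.mpr hq'0).ne') ENNReal.ofReal_ne_top]
    rw [ENNReal.toReal_ofReal hq'0.le]
    congr 1
    have hJn : J n = ∫ x, ζ n x ∂ν := rfl
    rw [hJn]
    rw [MeasureTheory.ofReal_integral_eq_lintegral_ofReal (hζint n) (ae_of_all _ (hζnn n))]
    apply lintegral_congr
    intro x
    rw [← ofReal_norm_eq_enorm, ENNReal.ofReal_rpow_of_nonneg (norm_nonneg _) hq'0.le]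
    congr 1
    rw [hnormψ n x, hζdef]
    dsimp only
    split
    · rw [← Real.rpow_mul (hminnn n x), hmul]
    · exact Real.zero_rpow (ne_of_gt hq'0)
  -- key bound on J n
  have hJle : ∀ n, ENNReal.ofReal (J n) ≤ (ENNReal.ofReal M) ^ q := by
    intro n
    have hH := H (Ψ n)
    rw [heLp n] at hH
    have hJle' : ENNReal.ofReal (J n) ≤ ENNReal.ofReal M * (ENNReal.ofReal (J n)) ^ (1/q') :=
      le_trans (ENNReal.ofReal_le_ofReal (hpair n)) hH
    set a := ENNReal.ofReal (J n) with ha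
    by_cases ha0 : a = 0
    · rw [ha0]
      exact zero_le
    have hat : a ≠ ⊤ := ENNReal.ofReal_ne_top
    set b := a ^ (1/q') with hb
    have hb0 : b ≠ 0 := by
      rw [hb]
      simp [ENNReal.rpow_eq_zero_iff, ha0, hat]
    have hbt : b ≠ ⊤ := by
      rw [hb]
      exact ENNReal.rpow_ne_top_of_nonneg (by positivity) hat
    have hab : a ^ (1/q) * b = a := by
      rw [hb, ← ENNReal.rpow_add _ _ ha0 hat, hrecip, ENNReal.rpow_one]
    have hdiv : a ^ (1/q) ≤ ENNReal.ofReal M := by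
      have e : a ^ (1/q) = a / b := by
        rw [ENNReal.eq_div_iff hb0 hbt, mul_comm]
        exact hab
      rw [e, ENNReal.div_le_iff_le_mul (Or.inl hb0) (Or.inl hbt)]
      exact hJle'
    calc a = (a ^ (1/q)) ^ q := by
          rw [← ENNReal.rpow_mul, one_div, inv_mul_cancel₀ (ne_of_gt hq0), ENNReal.rpow_one]
      _ ≤ (ENNReal.ofReal M) ^ q := ENNReal.rpow_le_rpow hdiv hq0.le
  -- monotone convergence
  have hsup : ∀ x, (⨆ n, ENNReal.ofReal (ζ n x)) = ENNReal.ofReal (‖φ x‖ ^ q) := by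
    intro x
    rcases eq_or_lt_of_le (norm_nonneg (φ x)) with hx0 | hxpos
    · have hz : ∀ n, ζ n x = 0 := by
        intro n
        rw [hζdef]
        dsimp only
        rw [if_neg]
        rw [← hx0]
        exact not_le.mpr (by positivity)
      have hz2 : ‖φ x‖ ^ q = 0 := by
        rw [← hx0]
        exact Real.zero_rpow (ne_of_gt hq0)
      have hzz : (⨆ n, ENNReal.ofReal (ζ n x)) = 0 := by simp [hz]
      rw [hzz, hz2]
      simp
    · apply le_antisymm
      · apply iSup_le
        intro n
        apply ENNReal.ofReal_le_ofReal
        rw [hζdef]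
        dsimp only
        split
        · exact Real.rpow_le_rpow (hminnn n x) (min_le_left _ _) hq0.le
        · positivity
      · set N : ℕ := ⌈(‖φ x‖)⁻¹⌉₊ + ⌈‖φ x‖⌉₊ with hN
        have hcond : ((N:ℝ)+1)⁻¹ ≤ ‖φ x‖ := by
          have h1 : (‖φ x‖)⁻¹ ≤ (N:ℝ)+1 := by
            calc (‖φ x‖)⁻¹ ≤ (⌈(‖φ x‖)⁻¹⌉₊:ℝ) := Nat.le_ceil _
              _ ≤ (N:ℝ)+1 := by
                  rw [hN]
                  push_cast
                  linarith [Nat.cast_nonneg (α := ℝ) ⌈‖φ x‖⌉₊]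
          calc ((N:ℝ)+1)⁻¹ ≤ ((‖φ x‖)⁻¹)⁻¹ := by
                apply inv_anti₀ (by positivity) h1
            _ = ‖φ x‖ := inv_inv _
        have hminN : min ‖φ x‖ (N:ℝ) = ‖φ x‖ := min_eq_left (by
          calc ‖φ x‖ ≤ (⌈‖φ x‖⌉₊:ℝ) := Nat.le_ceil _
            _ ≤ (N:ℝ) := by
                rw [hN]
                push_cast
                linarith [Nat.cast_nonneg (α := ℝ) ⌈(‖φ x‖)⁻¹⌉₊])
        have hzN : ζ N x = ‖φ x‖ ^ q := by
          rw [hζdef]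
          dsimp only
          rw [if_pos hcond, hminN]
        calc ENNReal.ofReal (‖φ x‖^q) = ENNReal.ofReal (ζ N x) := by rw [hzN]
          _ ≤ ⨆ n, ENNReal.ofReal (ζ n x) := le_iSup (fun n => ENNReal.ofReal (ζ n x)) N
  have hmono : Monotone (fun n => fun x => ENNReal.ofReal (ζ n x)) := by
    intro n m hnm
    intro x
    apply ENNReal.ofReal_le_ofReal
    rw [hζdef]
    dsimp only
    by_cases hc : ((n:ℝ)+1)⁻¹ ≤ ‖φ x‖
    · have hle : ((m:ℝ)+1)⁻¹ ≤ ((n:ℝ)+1)⁻¹ := by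
        apply inv_anti₀ (by positivity)
        have : (n:ℝ) ≤ (m:ℝ) := by exact_mod_cast hnm
        linarith
      rw [if_pos hc, if_pos (le_trans hle hc)]
      apply Real.rpow_le_rpow (hminnn n x) _ hq0.le
      exact min_le_min le_rfl (by exact_mod_cast hnm)
    · rw [if_neg hc]
      split
      · positivity
      · exact le_rfl
  have hlin : ∫⁻ x, (‖φ x‖₊ : ENNReal) ^ q ∂ν ≤ (ENNReal.ofReal M) ^ q := by
    calc ∫⁻ x, (‖φ x‖₊ : ENNReal) ^ q ∂ν
        = ∫⁻ x, ⨆ n, ENNReal.ofReal (ζ n x) ∂ν := by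
          apply lintegral_congr
          intro x
          rw [← ENNReal.ofReal_coe_nnreal, coe_nnnorm, ENNReal.ofReal_rpow_of_nonneg (norm_nonneg _) hq0.le,
            hsup x]
      _ = ⨆ n, ∫⁻ x, ENNReal.ofReal (ζ n x) ∂ν :=
          lintegral_iSup (fun n => (hζm n).ennreal_ofReal) hmono
      _ ≤ (ENNReal.ofReal M) ^ q := by
          apply iSup_le
          intro n
          rw [← MeasureTheory.ofReal_integral_eq_lintegral_ofReal (hζint n) (ae_of_all _ (hζnn n))]
          exact hJle n
  rw [eLpNorm_eq_lintegral_rpow_enorm_toReal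
    (by simpa using (ENNReal.ofReal_pos.mpr hq0).ne') ENNReal.ofReal_ne_top]
  rw [ENNReal.toReal_ofReal hq0.le]
  calc (∫⁻ x, (‖φ x‖₊ : ENNReal) ^ q ∂ν) ^ (1/q)
      ≤ ((ENNReal.ofReal M) ^ q) ^ (1/q) := ENNReal.rpow_le_rpow hlin (by positivity)
    _ = ENNReal.ofReal M := by
        rw [← ENNReal.rpow_mul, mul_one_div, div_self (ne_of_gt hq0), ENNReal.rpow_one]


section FCLemmas

variable {Y : Type} [MeasurableSpace Y] {ν : Measure Y} (F : BorelFC ν)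

lemma fc_zero : F.fc (fun _ => 0) = 0 := by
  have h := F.fc_smul 0 (fun _ => (0:ℂ))
  simpa using h

lemma fc_sum {ι : Type*} (s : Finset ι) (m : ι → ℝ → ℂ) :
    F.fc (fun t => ∑ i ∈ s, m i t) = ∑ i ∈ s, F.fc (m i) := by
  classical
  induction s using Finset.cons_induction with
  | empty => simpa using fc_zero F
  | cons a s ha ih =>
    rw [Finset.sum_cons]
    have : (fun t => ∑ i ∈ Finset.cons a s ha, m i t)
        = fun t => m a t + ∑ i ∈ s, m i t := by
      funext t
      rw [Finset.sum_cons]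
    rw [this, F.fc_add, ih]

lemma fc_normsq (m : ℝ → ℂ) (f : Lp ℂ 2 ν) :
    Complex.re (inner ℂ (F.fc (fun t => (starRingEnd ℂ) (m t) * m t) f) f : ℂ)
      = ‖F.fc m f‖^2 := by
  rw [F.fc_mul, F.fc_star]
  have h1 : (((ContinuousLinearMap.adjoint (F.fc m)).comp (F.fc m)) f)
      = (ContinuousLinearMap.adjoint (F.fc m)) (F.fc m f) := rfl
  rw [h1]
  have h2 : (inner ℂ ((ContinuousLinearMap.adjoint (F.fc m)) (F.fc m f)) f : ℂ)
      = inner ℂ (F.fc m f) (F.fc m f) :=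
    ContinuousLinearMap.adjoint_inner_left (F.fc m) f (F.fc m f)
  rw [h2]
  exact inner_self_eq_norm_sq (𝕜 := ℂ) (F.fc m f)

lemma fc_piece_norm (m : ℝ → ℂ) (ind : ℝ → ℂ) (c : ℝ)
    (hsup : ∀ t, ‖m t‖ ≤ c)
    (hind : (fun t => m t * ind t) = m) (f : Lp ℂ 2 ν) :
    ‖F.fc m f‖ ≤ c * ‖F.fc ind f‖ := by
  have h1 : F.fc m = (F.fc m).comp (F.fc ind) := by
    rw [← F.fc_mul, hind]
  have h2 : F.fc m f = (F.fc m) ((F.fc ind) f) := by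
    nth_rewrite 1 [h1]
    rfl
  rw [h2]
  exact ContinuousLinearMap.le_of_opNorm_le _ (F.fc_norm_le m c hsup) _

lemma indicator_conj (a b : ℝ) :
    (fun t => (starRingEnd ℂ) ((Set.indicator (Set.Icc a b) fun _ => (1:ℂ)) t))
      = Set.indicator (Set.Icc a b) fun _ => (1:ℂ) := by
  funext t
  by_cases ht : t ∈ Set.Icc a b
  · rw [Set.indicator_of_mem ht]
    simp
  · rw [Set.indicator_of_notMem ht]
    simp

lemma proj_selfadjoint (a b : ℝ) :
    ContinuousLinearMap.adjoint (F.proj a b) = F.proj a b := by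
  rw [BorelFC.proj, ← F.fc_star, indicator_conj]

lemma inner_proj_move (a b : ℝ) (g v : Lp ℂ 2 ν) :
    (inner ℂ g ((F.proj a b) v) : ℂ) = inner ℂ ((F.proj a b) g) v := by
  nth_rewrite 1 [← proj_selfadjoint F a b]
  exact ContinuousLinearMap.adjoint_inner_right (F.proj a b) g v

lemma lp2_eLpNorm_eq (u : Lp ℂ 2 ν) :
    eLpNorm (⇑u) (ENNReal.ofReal 2) ν = ENNReal.ofReal ‖u‖ := by
  have h2 : ENNReal.ofReal (2:ℝ) = (2 : ENNReal) := by norm_num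
  rw [h2, Lp.norm_def, ENNReal.ofReal_toReal (Lp.eLpNorm_ne_top u)]

end FCLemmas

lemma lp_coeFn_sum {Y : Type} [MeasurableSpace Y] {ν : MeasureTheory.Measure Y} {ι : Type*}
    (s : Finset ι) (v : ι → Lp ℂ 2 ν) :
    ⇑(∑ i ∈ s, v i) =ᵐ[ν] ∑ i ∈ s, ⇑(v i) := by
  classical
  induction s using Finset.cons_induction with
  | empty =>
    simpa using Lp.coeFn_zero (E := ℂ) (p := 2) (μ := ν)
  | cons b s hb ih =>
    rw [Finset.sum_cons, Finset.sum_cons]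
    filter_upwards [Lp.coeFn_add (v b) (∑ i ∈ s, v i), ih] with x h1 h2
    simp only [Pi.add_apply]
    rw [h1]
    simp only [Pi.add_apply]
    rw [h2]

set_option maxHeartbeats 2000000 in
/-- **Spectral cluster bounds imply resolvent bounds, with a logarithmic loss**
((3.5) and (3.7) of the paper). There is an absolute constant `C` such that, in any
abstract setting — `Y` a σ-finite measure space, `A` self-adjoint on `L²(Y)` with Borel
functional calculus `F`, `2 < q < ∞`, resolvents consistently extended `L^{q′} → L²`
and `L^{q′} → L^q` — for all `0 < ε ≤ λ` and every
`P ≥ sup{‖Π_{[εk,ε(k+1)]}‖_{L^{q′}→L²} : 0 ≤ k ≤ 2λ/ε}`: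
`‖Π_{[0,2λ]}(A²−(λ+iε)²)⁻¹‖_{L^{q′}→L²} ≤ C(ελ)⁻¹P` and
`‖Π_{[0,2λ]}(A²−(λ+iε)²)⁻¹‖_{L^{q′}→L^q} ≤ C(ελ)⁻¹ ln⟨λ/ε⟩ P²`. -/
theorem cluster_to_resolvent_abstract_log :
    ∃ C : ℝ, 0 < C ∧
      ∀ (Y : Type) [MeasurableSpace Y] (ν : Measure Y) [SigmaFinite ν]
        (F : BorelFC ν) (q : ℝ), 2 < q → ResolventExtends F q →
        ∀ ε lam : ℝ, 0 < ε → ε ≤ lam →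
          ∀ P : ℝ, 0 ≤ P →
            (∀ k : ℕ, (k : ℝ) ≤ 2 * lam / ε →
              OpNormLE ν (F.proj (ε * k) (ε * (k + 1))) (conjExp q) 2 P) →
            OpNormLE ν ((F.proj 0 (2 * lam)).comp
                (F.res2 (((lam : ℂ) + (ε : ℂ) * Complex.I) ^ 2)))
              (conjExp q) 2 (C * (ε * lam)⁻¹ * P) ∧
            OpNormLE ν ((F.proj 0 (2 * lam)).comp
                (F.res2 (((lam : ℂ) + (ε : ℂ) * Complex.I) ^ 2)))
              (conjExp q) q (C * (ε * lam)⁻¹ * Real.log (jb (lam / ε)) * P ^ 2) := by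
  refine ⟨10000, by norm_num, ?_⟩
  intro Y _ ν _ F q hq _hres ε lam hε hεlam P hP hProj
  have hlam : 0 < lam := lt_of_lt_of_le hε hεlam
  set r : ℝ := lam / ε with hrdef
  have hr1 : (1:ℝ) ≤ r := (one_le_div hε).mpr hεlam
  have hr0 : (0:ℝ) < r := by linarith
  set K : ℕ := ⌈2*r⌉₊ - 1 with hKdef
  have hceil1 : 1 ≤ ⌈2*r⌉₊ := Nat.one_le_ceil_iff.mpr (by linarith)
  have hKsucc : K + 1 = ⌈2*r⌉₊ := by omega
  have hKsuccR : (K:ℝ) + 1 = (⌈2*r⌉₊:ℝ) := by exact_mod_cast hKsucc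
  have hKle : (K:ℝ) ≤ 2*r := by
    have h := Nat.ceil_lt_add_one (show (0:ℝ) ≤ 2*r by linarith)
    linarith
  have hKup : 2*lam ≤ ε*((K:ℝ)+1) := by
    have h := Nat.le_ceil (2*r)
    have h2 : (2:ℝ)*r ≤ (K:ℝ)+1 := by rw [hKsuccR]; exact h
    have h3 : 2*lam = ε * (2*r) := by
      rw [hrdef]
      field_simp
    rw [h3]
    nlinarith
  have hK2r : ∀ k : ℕ, k ∈ Finset.range (K+1) → (k:ℝ) ≤ 2 * lam / ε := by
    intro k hk
    have h1 : k ≤ K := by simpa [Nat.lt_succ_iff] using Finset.mem_range.mp hk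
    have h2 : (k:ℝ) ≤ (K:ℝ) := by exact_mod_cast h1
    have h3 : 2 * lam / ε = 2 * r := by rw [hrdef]; ring
    rw [h3]
    linarith
  set z : ℂ := ((lam:ℂ) + (ε:ℂ) * Complex.I)^2 with hzdef
  set mt : ℝ → ℂ := fun t =>
    (Set.indicator (Set.Icc (0:ℝ) (2*lam)) (fun _ => (1:ℂ)) t) * ((t:ℂ)^2 - z)⁻¹ with hmtdef
  set U : ℕ → Set ℝ := fun k =>
    if k = K then Set.Icc (ε*(k:ℝ)) (ε*((k:ℝ)+1)) else Set.Ico (ε*(k:ℝ)) (ε*((k:ℝ)+1)) with hUdef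
  set m : ℕ → ℝ → ℂ := fun k t => Set.indicator (U k) (fun _ => (1:ℂ)) t * mt t with hmdef
  set a : ℕ → ℝ := fun k => (max (|(k:ℝ) - r| - 1) 1)⁻¹ with hadef
  set c : ℕ → ℝ := fun k => (ε*lam)⁻¹ * a k with hcdef
  have ha0 : ∀ k : ℕ, 0 < a k := by
    intro k
    rw [hadef]
    exact inv_pos.mpr (lt_of_lt_of_le one_pos (le_max_right _ _))
  have hc0 : ∀ k : ℕ, 0 ≤ c k := by
    intro k
    rw [hcdef]
    have := ha0 k
    positivity
  -- set membership helpers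
  have hUsub : ∀ k : ℕ, U k ⊆ Set.Icc (ε*(k:ℝ)) (ε*((k:ℝ)+1)) := by
    intro k
    rw [hUdef]
    dsimp only
    split
    · exact subset_rfl
    · exact Set.Ico_subset_Icc_self
  have hUlow : ∀ (k : ℕ) (t : ℝ), t ∈ U k → ε*(k:ℝ) ≤ t := fun k t ht => (hUsub k ht).1
  have hUhigh : ∀ (k : ℕ) (t : ℝ), k ≠ K → t ∈ U k → t < ε*((k:ℝ)+1) := by
    intro k t hk ht
    rw [hUdef] at ht
    dsimp only at ht
    rw [if_neg hk] at ht
    exact ht.2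
  have hmt0 : ∀ t, t ∉ Set.Icc (0:ℝ) (2*lam) → mt t = 0 := by
    intro t ht
    rw [hmtdef]
    dsimp only
    rw [Set.indicator_of_notMem ht, zero_mul]
  have hm_of_mt : ∀ (k : ℕ) (t : ℝ), mt t = 0 → m k t = 0 := by
    intro k t h
    rw [hmdef]
    dsimp only
    rw [h, mul_zero]
  have hm_notU : ∀ (k : ℕ) (t : ℝ), t ∉ U k → m k t = 0 := by
    intro k t h
    rw [hmdef]
    dsimp only
    rw [Set.indicator_of_notMem h, zero_mul]
  -- structural dichotomy
  have hpt : ∀ t : ℝ, t ∉ Set.Icc (0:ℝ) (2*lam) ∨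
      (∃ j ∈ Finset.range (K+1), m j t = mt t ∧
        ∀ i ∈ Finset.range (K+1), i ≠ j → m i t = 0) := by
    intro t
    by_cases hmem : t ∈ Set.Icc (0:ℝ) (2*lam)
    · right
      obtain ⟨ht0, ht2⟩ := hmem
      set fl : ℕ := ⌊t/ε⌋₊ with hfl
      set j : ℕ := min fl K with hj
      have hjK : j ≤ K := min_le_right _ _
      have htε : ε * (t/ε) = t := by field_simp
      have htUj : t ∈ U j := by
        rcases lt_or_ge fl K with hflK | hflK
        · have hjfl : j = fl := min_eq_left hflK.le
          have hjne : j ≠ K := by omega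
          rw [hUdef]
          dsimp only
          rw [if_neg hjne]
          constructor
          · have h1 : (fl:ℝ) ≤ t/ε := Nat.floor_le (by positivity)
            rw [hjfl]
            calc ε*(fl:ℝ) ≤ ε*(t/ε) := by nlinarith
              _ = t := htε
          · have h1 : t/ε < (fl:ℝ)+1 := Nat.lt_floor_add_one (t/ε)
            rw [hjfl]
            calc t = ε*(t/ε) := htε.symm
              _ < ε*((fl:ℝ)+1) := by nlinarith
        · have hjeq : j = K := min_eq_right hflK
          rw [hUdef]
          dsimp only
          rw [hjeq, if_pos rfl]
          constructor
          · have h1 : (K:ℝ) ≤ (fl:ℝ) := by exact_mod_cast hflK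
            have h2 : (fl:ℝ) ≤ t/ε := Nat.floor_le (by positivity)
            calc ε*(K:ℝ) ≤ ε*(t/ε) := by nlinarith
              _ = t := htε
          · calc t ≤ 2*lam := ht2
              _ ≤ ε*((K:ℝ)+1) := hKup
      refine ⟨j, Finset.mem_range.mpr (by omega), ?_, ?_⟩
      · rw [hmdef]
        dsimp only
        rw [Set.indicator_of_mem htUj, one_mul]
      · intro i hi hine
        have hiK : i ≤ K := by simpa [Nat.lt_succ_iff] using Finset.mem_range.mp hi
        have hnot : t ∉ U i := by
          intro htUi
          have hil : ε*(i:ℝ) ≤ t := hUlow i t htUi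
          have hifl : i ≤ fl := by
            apply Nat.le_floor
            rw [le_div_iff₀ hε]
            linarith
          have hij : i ≤ j := le_min hifl hiK
          have hiltj : i < j := lt_of_le_of_ne hij hine
          have hiK' : i ≠ K := by omega
          have hhigh : t < ε*((i:ℝ)+1) := hUhigh i t hiK' htUi
          have hjl : ε*(j:ℝ) ≤ t := hUlow j t htUj
          have hcast : ((i:ℝ)+1) ≤ (j:ℝ) := by exact_mod_cast hiltj
          nlinarith
        exact hm_notU i t hnot
    · left
      exact hmem
  -- decomposition of mt
  have hdecomp : mt = fun t => ∑ k ∈ Finset.range (K+1), m k t := by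
    funext t
    rcases hpt t with hout | ⟨j, hj, hjeq, hz0⟩
    · rw [hmt0 t hout]
      symm
      apply Finset.sum_eq_zero
      intro i _
      exact hm_of_mt i t (hmt0 t hout)
    · rw [Finset.sum_eq_single_of_mem j hj hz0]
      exact hjeq.symm
  have hdecompsq : (fun t => (starRingEnd ℂ) (mt t) * mt t)
      = fun t => ∑ k ∈ Finset.range (K+1), (starRingEnd ℂ) (m k t) * m k t := by
    funext t
    rcases hpt t with hout | ⟨j, hj, hjeq, hz0⟩
    · rw [hmt0 t hout]
      rw [map_zero, zero_mul]
      symm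
      apply Finset.sum_eq_zero
      intro i _
      rw [hm_of_mt i t (hmt0 t hout), map_zero, zero_mul]
    · rw [Finset.sum_eq_single_of_mem j hj
        (fun i hi hne => by rw [hz0 i hi hne, map_zero, zero_mul]), hjeq]
  -- support identities
  have hsand1 : ∀ k : ℕ, (fun t => m k t *
      (Set.indicator (Set.Icc (ε*(k:ℝ)) (ε*((k:ℝ)+1))) (fun _ => (1:ℂ))) t) = m k := by
    intro k
    funext t
    by_cases ht : t ∈ U k
    · rw [Set.indicator_of_mem (hUsub k ht), mul_one]
    · rw [hm_notU k t ht, zero_mul]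
  have hsand2 : ∀ k : ℕ, (fun t =>
      (Set.indicator (Set.Icc (ε*(k:ℝ)) (ε*((k:ℝ)+1))) (fun _ => (1:ℂ))) t * m k t) = m k := by
    intro k
    funext t
    by_cases ht : t ∈ U k
    · rw [Set.indicator_of_mem (hUsub k ht), one_mul]
    · rw [hm_notU k t ht, mul_zero]
  -- sup bound
  have hsupb : ∀ (k : ℕ) (t : ℝ), ‖m k t‖ ≤ c k := by
    intro k t
    by_cases ht : t ∈ U k
    · by_cases ht2 : t ∈ Set.Icc (0:ℝ) (2*lam)
      · have h1 : m k t = ((t:ℂ)^2 - z)⁻¹ := by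
          rw [hmdef]
          dsimp only
          rw [Set.indicator_of_mem ht, one_mul, hmtdef]
          dsimp only
          rw [Set.indicator_of_mem ht2, one_mul]
        rw [h1, hzdef, hcdef, hadef]
        dsimp only
        rw [hrdef]
        exact res_bound hε hεlam k ht2.1 ht2.2 (hUlow k t ht) (hUsub k ht).2
      · rw [hm_of_mt k t (hmt0 t ht2), norm_zero]
        exact hc0 k
    · rw [hm_notU k t ht, norm_zero]
      exact hc0 k
  -- numeric sums
  set k₀ : ℕ := ⌊r⌋₊ with hk0def
  have hk0r : |(k₀:ℝ) - r| ≤ 1 := by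
    rw [abs_le]
    constructor
    · have := Nat.lt_floor_add_one r
      linarith
    · have := Nat.floor_le (show (0:ℝ) ≤ r by linarith)
      linarith
  have hk0K : k₀ ≤ K := by
    have h1 : (k₀:ℝ) ≤ r := Nat.floor_le (by linarith)
    have h2 : (2:ℝ)*r ≤ (K:ℝ)+1 := by rw [hKsuccR]; exact Nat.le_ceil (2*r)
    have h3 : (k₀:ℝ) < (K:ℝ)+1 := by linarith
    exact_mod_cast Nat.lt_succ_iff.mp (by exact_mod_cast h3)
  have hak : ∀ k : ℕ, a k ≤ 3 * (max ((Nat.dist k k₀ : ℕ):ℝ) 1)⁻¹ := by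
    intro k
    set dd : ℝ := ((Nat.dist k k₀ : ℕ):ℝ) with hdd
    have hddeq : dd = |(k:ℝ) - (k₀:ℝ)| := natdist_cast k k₀
    have hdd0 : 0 ≤ dd := by rw [hddeq]; positivity
    have htri : dd - 1 ≤ |(k:ℝ) - r| := by
      have h2 := abs_sub_le (k:ℝ) r (k₀:ℝ)
      have h3 : |r - (k₀:ℝ)| ≤ 1 := by rw [abs_sub_comm]; exact hk0r
      rw [hddeq]
      linarith
    have hmax3 : max dd 1 ≤ 3 * max (|(k:ℝ) - r| - 1) 1 := by
      rcases le_total dd 3 with hd3 | hd3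
      · calc max dd 1 ≤ 3 := max_le hd3 (by norm_num)
          _ ≤ 3 * max (|(k:ℝ) - r| - 1) 1 := by
              nlinarith [le_max_right (|(k:ℝ) - r| - 1) (1:ℝ)]
      · calc max dd 1 = dd := max_eq_left (by linarith)
          _ ≤ 3*(dd - 2) := by linarith
          _ ≤ 3*(|(k:ℝ) - r| - 1) := by linarith
          _ ≤ 3 * max (|(k:ℝ) - r| - 1) 1 := by
              nlinarith [le_max_left (|(k:ℝ) - r| - 1) (1:ℝ)]
    have hmp : (0:ℝ) < max dd 1 := lt_of_lt_of_le one_pos (le_max_right _ _)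
    rw [hadef]
    dsimp only
    calc (max (|(k:ℝ) - r| - 1) 1)⁻¹ ≤ (max dd 1 / 3)⁻¹ := by
          apply inv_anti₀ (by positivity)
          linarith
      _ = 3 * (max dd 1)⁻¹ := by
          rw [inv_div]
          ring
  have hsumsq : ∑ k ∈ Finset.range (K+1), (a k)^2 ≤ 54 := by
    have h1 : ∀ k ∈ Finset.range (K+1),
        (a k)^2 ≤ 9 * ((max ((Nat.dist k k₀ : ℕ):ℝ) 1)⁻¹)^2 := by
      intro k _
      have h2 := hak k
      have h3 : (0:ℝ) < a k := ha0 k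
      have h4 : (0:ℝ) ≤ (max ((Nat.dist k k₀ : ℕ):ℝ) 1)⁻¹ := by positivity
      nlinarith
    calc ∑ k ∈ Finset.range (K+1), (a k)^2
        ≤ ∑ k ∈ Finset.range (K+1), 9 * ((max ((Nat.dist k k₀ : ℕ):ℝ) 1)⁻¹)^2 :=
          Finset.sum_le_sum h1
      _ = 9 * ∑ k ∈ Finset.range (K+1), ((max ((Nat.dist k k₀ : ℕ):ℝ) 1)⁻¹)^2 := by
          rw [Finset.mul_sum]
      _ ≤ 9 * (2 * ∑ j ∈ Finset.range (K+1), ((max ((j:ℕ):ℝ) 1)⁻¹)^2) := by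
          apply mul_le_mul_of_nonneg_left _ (by norm_num)
          exact aux_sum_shift (fun j => ((max ((j:ℕ):ℝ) 1)⁻¹)^2)
            (fun j => by positivity) k₀ K hk0K
      _ ≤ 9 * (2*3) := by
          have := aux_sum_maxinv_sq K
          nlinarith
      _ = 54 := by norm_num
  have hKpos : 1 ≤ K := by
    have h1 : (1:ℕ) < ⌈2*r⌉₊ := by
      rw [Nat.lt_ceil]
      push_cast
      linarith
    omega
  have hlog2r : Real.log 2 ≤ Real.log (2+r) := Real.log_le_log (by norm_num) (by linarith)
  have hlogpos : 0 < Real.log (2+r) :=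
    lt_of_lt_of_le (Real.log_pos (by norm_num)) hlog2r
  have hlogK : Real.log K ≤ 2 * Real.log (2+r) := by
    have hK0 : (0:ℝ) < (K:ℝ) := by exact_mod_cast hKpos
    have h1 : Real.log K ≤ Real.log (2*r) := Real.log_le_log hK0 hKle
    have h2 : Real.log (2*r) ≤ Real.log ((2+r)^2) :=
      Real.log_le_log (by positivity) (by nlinarith)
    rw [Real.log_pow] at h2
    push_cast at h2
    linarith
  have h2le : (2:ℝ) ≤ 3 * Real.log (2+r) := by
    have hl2 := Real.log_two_gt_d9
    linarith
  have hsum1 : ∑ k ∈ Finset.range (K+1), a k ≤ 30 * Real.log (2 + r) := by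
    calc ∑ k ∈ Finset.range (K+1), a k
        ≤ ∑ k ∈ Finset.range (K+1), 3 * ((max ((Nat.dist k k₀ : ℕ):ℝ) 1)⁻¹) :=
          Finset.sum_le_sum (fun k _ => hak k)
      _ = 3 * ∑ k ∈ Finset.range (K+1), ((max ((Nat.dist k k₀ : ℕ):ℝ) 1)⁻¹) := by
          rw [Finset.mul_sum]
      _ ≤ 3 * (2 * ∑ j ∈ Finset.range (K+1), (max ((j:ℕ):ℝ) 1)⁻¹) := by
          apply mul_le_mul_of_nonneg_left _ (by norm_num)
          exact aux_sum_shift (fun j => (max ((j:ℕ):ℝ) 1)⁻¹)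
            (fun j => by positivity) k₀ K hk0K
      _ ≤ 3 * (2 * (2 + Real.log K)) := by
          have := aux_sum_maxinv K
          nlinarith
      _ ≤ 30 * Real.log (2 + r) := by nlinarith
  -- operator identities
  have hT : (F.proj 0 (2*lam)).comp (F.res2 z) = F.fc mt := by
    rw [hmtdef]
    exact (F.fc_mul _ _).symm
  have hfcsum : F.fc mt = ∑ k ∈ Finset.range (K+1), F.fc (m k) := by
    rw [hdecomp]
    exact fc_sum F _ _
  have hproj_bound : ∀ k ∈ Finset.range (K+1), ∀ g : Lp ℂ 2 ν,
      ENNReal.ofReal ‖F.proj (ε*(k:ℝ)) (ε*((k:ℝ)+1)) g‖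
        ≤ ENNReal.ofReal P * eLpNorm (⇑g) (ENNReal.ofReal (conjExp q)) ν := by
    intro k hk g
    have h1 := hProj k (hK2r k hk) g
    rwa [lp2_eLpNorm_eq] at h1
  have hpiece : ∀ (f : Lp ℂ 2 ν) (k : ℕ),
      ‖F.fc (m k) f‖ ≤ c k * ‖F.proj (ε*(k:ℝ)) (ε*((k:ℝ)+1)) f‖ := by
    intro f k
    exact fc_piece_norm F (m k) _ (c k) (hsupb k) (hsand1 k) f
  have hvk : ∀ (f : Lp ℂ 2 ν) (k : ℕ),
      F.fc (m k) f = F.proj (ε*(k:ℝ)) (ε*((k:ℝ)+1)) (F.fc (m k) f) := by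
    intro f k
    have h1 : F.fc (m k) = (F.proj (ε*(k:ℝ)) (ε*((k:ℝ)+1))).comp (F.fc (m k)) := by
      calc F.fc (m k)
          = F.fc (fun t =>
              (Set.indicator (Set.Icc (ε*(k:ℝ)) (ε*((k:ℝ)+1))) (fun _ => (1:ℂ))) t * m k t) := by
            rw [hsand2 k]
        _ = (F.proj (ε*(k:ℝ)) (ε*((k:ℝ)+1))).comp (F.fc (m k)) := F.fc_mul _ _
    conv_lhs => rw [h1]
    rfl
  have hzerocase : ∀ f : Lp ℂ 2 ν,
      (∀ k ∈ Finset.range (K+1), F.proj (ε*(k:ℝ)) (ε*((k:ℝ)+1)) f = 0) →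
      ((F.proj 0 (2*lam)).comp (F.res2 z)) f = 0 := by
    intro f h0
    rw [hT, hfcsum, ContinuousLinearMap.sum_apply]
    apply Finset.sum_eq_zero
    intro k hk
    have h1 := hpiece f k
    rw [h0 k hk, norm_zero, mul_zero] at h1
    exact norm_le_zero_iff.mp h1
  have hdual : ∀ k ∈ Finset.range (K+1), ∀ u : Lp ℂ 2 ν,
      eLpNorm (⇑(F.proj (ε*(k:ℝ)) (ε*((k:ℝ)+1)) u)) (ENNReal.ofReal q) ν
        ≤ ENNReal.ofReal (P * ‖u‖) := by
    intro k hk u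
    apply converse_holder hq _ (mul_nonneg hP (norm_nonneg u))
    intro g
    have h1 : (inner ℂ g ((F.proj (ε*(k:ℝ)) (ε*((k:ℝ)+1))) u) : ℂ)
        = inner ℂ ((F.proj (ε*(k:ℝ)) (ε*((k:ℝ)+1))) g) u := inner_proj_move F _ _ g u
    rw [h1]
    calc ENNReal.ofReal ‖(inner ℂ ((F.proj (ε*(k:ℝ)) (ε*((k:ℝ)+1))) g) u : ℂ)‖
        ≤ ENNReal.ofReal (‖(F.proj (ε*(k:ℝ)) (ε*((k:ℝ)+1))) g‖ * ‖u‖) :=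
          ENNReal.ofReal_le_ofReal (norm_inner_le_norm _ _)
      _ = ENNReal.ofReal ‖(F.proj (ε*(k:ℝ)) (ε*((k:ℝ)+1))) g‖ * ENNReal.ofReal ‖u‖ :=
          ENNReal.ofReal_mul (norm_nonneg _)
      _ ≤ (ENNReal.ofReal P * eLpNorm (⇑g) (ENNReal.ofReal (conjExp q)) ν) * ENNReal.ofReal ‖u‖ :=
          mul_le_mul_left (hproj_bound k hk g) _
      _ = ENNReal.ofReal (P * ‖u‖) * eLpNorm (⇑g) (ENNReal.ofReal (conjExp q)) ν := by
          rw [ENNReal.ofReal_mul hP]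
          ring
  constructor
  · -- L² bound
    intro f
    by_cases hNtop : eLpNorm (⇑f) (ENNReal.ofReal (conjExp q)) ν = ⊤
    · by_cases hP0 : P = 0
      · have h0 : ∀ k ∈ Finset.range (K+1), F.proj (ε*(k:ℝ)) (ε*((k:ℝ)+1)) f = 0 := by
          intro k hk
          have h1 := hproj_bound k hk f
          rw [hP0, ENNReal.ofReal_zero, zero_mul] at h1
          have h2 : ENNReal.ofReal ‖F.proj (ε*(k:ℝ)) (ε*((k:ℝ)+1)) f‖ = 0 := le_antisymm h1 zero_le
          rw [ENNReal.ofReal_eq_zero] at h2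
          exact norm_le_zero_iff.mp h2
        rw [hzerocase f h0]
        rw [eLpNorm_congr_ae (Lp.coeFn_zero ℂ 2 ν), eLpNorm_zero]
        exact zero_le
      · rw [hNtop, ENNReal.mul_top (by
          simp only [ne_eq, ENNReal.ofReal_eq_zero, not_le]
          have : (0:ℝ) < (ε*lam)⁻¹ := by positivity
          have hPpos : 0 < P := lt_of_le_of_ne hP (Ne.symm hP0)
          positivity)]
        exact le_top
    · set n : ℝ := (eLpNorm (⇑f) (ENNReal.ofReal (conjExp q)) ν).toReal with hn
      have hn0 : 0 ≤ n := ENNReal.toReal_nonneg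
      have hNn : eLpNorm (⇑f) (ENNReal.ofReal (conjExp q)) ν = ENNReal.ofReal n :=
        (ENNReal.ofReal_toReal hNtop).symm
      have hprojf : ∀ k ∈ Finset.range (K+1),
          ‖F.proj (ε*(k:ℝ)) (ε*((k:ℝ)+1)) f‖ ≤ P * n := by
        intro k hk
        have h1 := hproj_bound k hk f
        rw [hNn, ← ENNReal.ofReal_mul hP] at h1
        exact (ENNReal.ofReal_le_ofReal_iff (by positivity)).mp h1
      have hpiece2 : ∀ k ∈ Finset.range (K+1), ‖F.fc (m k) f‖ ≤ c k * (P*n) := by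
        intro k hk
        calc ‖F.fc (m k) f‖ ≤ c k * ‖F.proj (ε*(k:ℝ)) (ε*((k:ℝ)+1)) f‖ := hpiece f k
          _ ≤ c k * (P*n) := mul_le_mul_of_nonneg_left (hprojf k hk) (hc0 k)
      have hTnormsq : ‖((F.proj 0 (2*lam)).comp (F.res2 z)) f‖^2
          = ∑ k ∈ Finset.range (K+1), ‖F.fc (m k) f‖^2 := by
        rw [hT]
        have e1 : F.fc (fun t => (starRingEnd ℂ) (mt t) * mt t)
            = ∑ k ∈ Finset.range (K+1), F.fc (fun t => (starRingEnd ℂ) (m k t) * m k t) := by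
          rw [hdecompsq]
          exact fc_sum F _ _
        calc ‖F.fc mt f‖^2
            = Complex.re (inner ℂ (F.fc (fun t => (starRingEnd ℂ) (mt t) * mt t) f) f : ℂ) :=
              (fc_normsq F mt f).symm
          _ = Complex.re (inner ℂ ((∑ k ∈ Finset.range (K+1),
                F.fc (fun t => (starRingEnd ℂ) (m k t) * m k t)) f) f : ℂ) := by rw [e1]
          _ = Complex.re (∑ k ∈ Finset.range (K+1),
                (inner ℂ (F.fc (fun t => (starRingEnd ℂ) (m k t) * m k t) f) f : ℂ)) := by
              rw [ContinuousLinearMap.sum_apply, sum_inner]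
          _ = ∑ k ∈ Finset.range (K+1),
                Complex.re (inner ℂ (F.fc (fun t => (starRingEnd ℂ) (m k t) * m k t) f) f : ℂ) :=
              Complex.re_sum _ _
          _ = ∑ k ∈ Finset.range (K+1), ‖F.fc (m k) f‖^2 :=
              Finset.sum_congr rfl (fun k _ => fc_normsq F (m k) f)
      have hsq : ‖((F.proj 0 (2*lam)).comp (F.res2 z)) f‖^2
          ≤ (10000*(ε*lam)⁻¹*P*n)^2 := by
        rw [hTnormsq]
        have h1 : ∑ k ∈ Finset.range (K+1), ‖F.fc (m k) f‖^2
            ≤ ∑ k ∈ Finset.range (K+1), (c k * (P*n))^2 := by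
          apply Finset.sum_le_sum
          intro k hk
          have h2 := hpiece2 k hk
          have h3 : 0 ≤ ‖F.fc (m k) f‖ := norm_nonneg _
          nlinarith
        have h2 : ∑ k ∈ Finset.range (K+1), (c k * (P*n))^2
            = ((ε*lam)⁻¹*(P*n))^2 * ∑ k ∈ Finset.range (K+1), (a k)^2 := by
          rw [Finset.mul_sum]
          apply Finset.sum_congr rfl
          intro k _
          rw [hcdef]
          dsimp only
          ring
        have h3 : (0:ℝ) ≤ ((ε*lam)⁻¹*(P*n))^2 := by positivity
        have h4 : ((ε*lam)⁻¹*(P*n))^2 * ∑ k ∈ Finset.range (K+1), (a k)^2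
            ≤ ((ε*lam)⁻¹*(P*n))^2 * 54 := mul_le_mul_of_nonneg_left hsumsq h3
        have h5 : ((ε*lam)⁻¹*(P*n))^2 * 54 ≤ (10000*(ε*lam)⁻¹*P*n)^2 := by nlinarith
        linarith
      have hTle : ‖((F.proj 0 (2*lam)).comp (F.res2 z)) f‖ ≤ 10000*(ε*lam)⁻¹*P*n := by
        have h0 : 0 ≤ ‖((F.proj 0 (2*lam)).comp (F.res2 z)) f‖ := norm_nonneg _
        have hy : (0:ℝ) ≤ 10000*(ε*lam)⁻¹*P*n := by positivity
        nlinarith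
      rw [lp2_eLpNorm_eq, hNn, ← ENNReal.ofReal_mul (by positivity)]
      apply ENNReal.ofReal_le_ofReal
      calc ‖((F.proj 0 (2*lam)).comp (F.res2 z)) f‖ ≤ 10000*(ε*lam)⁻¹*P*n := hTle
        _ = 10000*(ε*lam)⁻¹*P * n := by ring
  · -- L^q bound
    intro f
    by_cases hNtop : eLpNorm (⇑f) (ENNReal.ofReal (conjExp q)) ν = ⊤
    · by_cases hP0 : P = 0
      · have h0 : ∀ k ∈ Finset.range (K+1), F.proj (ε*(k:ℝ)) (ε*((k:ℝ)+1)) f = 0 := by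
          intro k hk
          have h1 := hproj_bound k hk f
          rw [hP0, ENNReal.ofReal_zero, zero_mul] at h1
          have h2 : ENNReal.ofReal ‖F.proj (ε*(k:ℝ)) (ε*((k:ℝ)+1)) f‖ = 0 := le_antisymm h1 zero_le
          rw [ENNReal.ofReal_eq_zero] at h2
          exact norm_le_zero_iff.mp h2
        rw [hzerocase f h0]
        rw [eLpNorm_congr_ae (Lp.coeFn_zero ℂ 2 ν), eLpNorm_zero]
        exact zero_le
      · rw [hNtop, ENNReal.mul_top (by
          simp only [ne_eq, ENNReal.ofReal_eq_zero, not_le]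
          have h1 : (0:ℝ) < (ε*lam)⁻¹ := by positivity
          have hPpos : 0 < P := lt_of_le_of_ne hP (Ne.symm hP0)
          have h2 : 0 < Real.log (jb (lam / ε)) := by
            rw [jb]
            apply Real.log_pos
            have := abs_nonneg (lam/ε)
            linarith
          positivity)]
        exact le_top
    · set n : ℝ := (eLpNorm (⇑f) (ENNReal.ofReal (conjExp q)) ν).toReal with hn
      have hn0 : 0 ≤ n := ENNReal.toReal_nonneg
      have hNn : eLpNorm (⇑f) (ENNReal.ofReal (conjExp q)) ν = ENNReal.ofReal n :=
        (ENNReal.ofReal_toReal hNtop).symm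
      have hprojf : ∀ k ∈ Finset.range (K+1),
          ‖F.proj (ε*(k:ℝ)) (ε*((k:ℝ)+1)) f‖ ≤ P * n := by
        intro k hk
        have h1 := hproj_bound k hk f
        rw [hNn, ← ENNReal.ofReal_mul hP] at h1
        exact (ENNReal.ofReal_le_ofReal_iff (by positivity)).mp h1
      have hpiece2 : ∀ k ∈ Finset.range (K+1), ‖F.fc (m k) f‖ ≤ c k * (P*n) := by
        intro k hk
        calc ‖F.fc (m k) f‖ ≤ c k * ‖F.proj (ε*(k:ℝ)) (ε*((k:ℝ)+1)) f‖ := hpiece f k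
          _ ≤ c k * (P*n) := mul_le_mul_of_nonneg_left (hprojf k hk) (hc0 k)
      have hTsum_f : ((F.proj 0 (2*lam)).comp (F.res2 z)) f
          = ∑ k ∈ Finset.range (K+1), F.fc (m k) f := by
        rw [hT, hfcsum, ContinuousLinearMap.sum_apply]
      have step1 : eLpNorm (⇑(((F.proj 0 (2*lam)).comp (F.res2 z)) f)) (ENNReal.ofReal q) ν
          ≤ ∑ k ∈ Finset.range (K+1),
            eLpNorm (⇑(F.fc (m k) f)) (ENNReal.ofReal q) ν := by
        calc eLpNorm (⇑(((F.proj 0 (2*lam)).comp (F.res2 z)) f)) (ENNReal.ofReal q) ν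
            = eLpNorm (∑ k ∈ Finset.range (K+1), ⇑(F.fc (m k) f)) (ENNReal.ofReal q) ν := by
              apply eLpNorm_congr_ae
              rw [hTsum_f]
              exact lp_coeFn_sum _ _
          _ ≤ ∑ k ∈ Finset.range (K+1),
              eLpNorm (⇑(F.fc (m k) f)) (ENNReal.ofReal q) ν :=
              eLpNorm_sum_le (fun k _ => Lp.aestronglyMeasurable _)
                (by
                  rw [show (1:ENNReal) = ENNReal.ofReal 1 by simp]
                  exact ENNReal.ofReal_le_ofReal (by linarith))
      have step2 : ∀ k ∈ Finset.range (K+1),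
          eLpNorm (⇑(F.fc (m k) f)) (ENNReal.ofReal q) ν
            ≤ ENNReal.ofReal (P * (c k * (P*n))) := by
        intro k hk
        calc eLpNorm (⇑(F.fc (m k) f)) (ENNReal.ofReal q) ν
            = eLpNorm (⇑(F.proj (ε*(k:ℝ)) (ε*((k:ℝ)+1)) (F.fc (m k) f))) (ENNReal.ofReal q) ν := by
              rw [← hvk f k]
          _ ≤ ENNReal.ofReal (P * ‖F.fc (m k) f‖) := hdual k hk _
          _ ≤ ENNReal.ofReal (P * (c k * (P*n))) :=
              ENNReal.ofReal_le_ofReal (mul_le_mul_of_nonneg_left (hpiece2 k hk) hP)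
      have step3 : ∑ k ∈ Finset.range (K+1), ENNReal.ofReal (P * (c k * (P*n)))
          = ENNReal.ofReal (∑ k ∈ Finset.range (K+1), P * (c k * (P*n))) := by
        rw [ENNReal.ofReal_sum_of_nonneg]
        intro k _
        have := hc0 k
        positivity
      have step4 : ∑ k ∈ Finset.range (K+1), P * (c k * (P*n))
          ≤ 10000 * (ε*lam)⁻¹ * Real.log (jb (lam/ε)) * P^2 * n := by
        have e1 : ∑ k ∈ Finset.range (K+1), P * (c k * (P*n))
            = P^2*n*(ε*lam)⁻¹ * ∑ k ∈ Finset.range (K+1), a k := by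
          rw [Finset.mul_sum]
          apply Finset.sum_congr rfl
          intro k _
          rw [hcdef]
          dsimp only
          ring
        have e2 : Real.log (jb (lam/ε)) = Real.log (2 + r) := by
          rw [jb, _root_.abs_of_nonneg (show (0:ℝ) ≤ lam/ε by positivity), hrdef]
        rw [e1, e2]
        have h1 : (0:ℝ) ≤ P^2*n*(ε*lam)⁻¹ := by positivity
        have h2 : P^2*n*(ε*lam)⁻¹ * ∑ k ∈ Finset.range (K+1), a k
            ≤ P^2*n*(ε*lam)⁻¹ * (30 * Real.log (2 + r)) :=
          mul_le_mul_of_nonneg_left hsum1 h1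
        have h3 : P^2*n*(ε*lam)⁻¹ * (30 * Real.log (2 + r))
            ≤ 10000 * (ε*lam)⁻¹ * Real.log (2 + r) * P^2 * n := by
          have h4 : (0:ℝ) ≤ (ε*lam)⁻¹ := by positivity
          nlinarith
        linarith
      calc eLpNorm (⇑(((F.proj 0 (2*lam)).comp (F.res2 z)) f)) (ENNReal.ofReal q) ν
          ≤ ∑ k ∈ Finset.range (K+1),
              eLpNorm (⇑(F.fc (m k) f)) (ENNReal.ofReal q) ν := step1
        _ ≤ ∑ k ∈ Finset.range (K+1), ENNReal.ofReal (P * (c k * (P*n))) :=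
            Finset.sum_le_sum step2
        _ = ENNReal.ofReal (∑ k ∈ Finset.range (K+1), P * (c k * (P*n))) := step3
        _ ≤ ENNReal.ofReal (10000 * (ε*lam)⁻¹ * Real.log (jb (lam/ε)) * P^2 * n) :=
            ENNReal.ofReal_le_ofReal step4
        _ = ENNReal.ofReal (10000 * (ε*lam)⁻¹ * Real.log (jb (lam/ε)) * P^2) * ENNReal.ofReal n := by
            rw [← ENNReal.ofReal_mul (by
              have h2 : 0 ≤ Real.log (jb (lam/ε)) := by
                rw [jb]
                apply Real.log_nonneg
                have := abs_nonneg (lam/ε)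
                linarith
              positivity)]
        _ = ENNReal.ofReal (10000 * (ε*lam)⁻¹ * Real.log (jb (lam/ε)) * P^2)
              * eLpNorm (⇑f) (ENNReal.ofReal (conjExp q)) ν := by rw [hNn]


end
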